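/- Suppose the past assortments are the reverse revenue-ordered assortments and the revenues r(0) = 0 < r(1) < ⋯ < r(n) are fixed. Then for every S̄ ⊆ N₀ with {0, n} ⊆ S̄, there exist real numbers v_{m,i} (for m ∈ {1,…,n} and i ∈ S_m), serving as the historical sales data, such that the corresponding uncertainty set U_0 is nonempty and S̄ is the unique optimal solution of the robust optimization problem with η = 0: for every S ∈ 𝒮 with S ≠ S̄, inf_{λ ∈ U_0} R^λ(S) < inf_{λ ∈ U_0} R^λ(S̄). -/
import Mathlib


namespace RobustAssortment

open Finset

/-- `i` is the most preferred product of the assortment `S` under the ranking `σ`. -/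
def isTop {n : ℕ} (σ : Equiv.Perm (Fin (n + 1))) (S : Finset (Fin (n + 1)))
    (i : Fin (n + 1)) : Prop :=
  i ∈ S ∧ ∀ j ∈ S, σ i ≤ σ j

instance {n : ℕ} (σ : Equiv.Perm (Fin (n + 1))) (S : Finset (Fin (n + 1)))
    (i : Fin (n + 1)) : Decidable (isTop σ S i) := by
  unfold isTop; infer_instance
/-- A ranking-based choice model: nonnegative weights on rankings summing to one. -/
def IsChoiceModel {n : ℕ} (lam : Equiv.Perm (Fin (n + 1)) → ℝ) : Prop :=
  (∀ σ, 0 ≤ lam σ) ∧ ∑ σ : Equiv.Perm (Fin (n + 1)), lam σ = 1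

/-- Choice probability `D^λ_i(S)`. -/
noncomputable def choiceProb {n : ℕ} (lam : Equiv.Perm (Fin (n + 1)) → ℝ)
    (S : Finset (Fin (n + 1))) (i : Fin (n + 1)) : ℝ :=
  ∑ σ : Equiv.Perm (Fin (n + 1)), if isTop σ S i then lam σ else 0

/-- Expected revenue `R^λ(S)`. -/
noncomputable def expRev {n : ℕ} (r : Fin (n + 1) → ℝ)
    (lam : Equiv.Perm (Fin (n + 1)) → ℝ) (S : Finset (Fin (n + 1))) : ℝ :=
  ∑ i ∈ S, r i * choiceProb lam S i

/-- The uncertainty set `U_η` of choice models consistent with the sales data. -/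
def Uset {n M : ℕ} (Sm : Fin M → Finset (Fin (n + 1)))
    (v : Fin M → Fin (n + 1) → ℝ) (η : ℝ) :
    Set (Equiv.Perm (Fin (n + 1)) → ℝ) :=
  {lam | IsChoiceModel lam ∧
    ∀ m : Fin M, ∀ i ∈ Sm m, |choiceProb lam (Sm m) i - v m i| ≤ η}

/-- Worst-case expected revenue `inf_{λ ∈ U_η} R^λ(S)`. -/
noncomputable def wcRev {n M : ℕ} (Sm : Fin M → Finset (Fin (n + 1)))
    (v : Fin M → Fin (n + 1) → ℝ) (η : ℝ) (r : Fin (n + 1) → ℝ)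
    (S : Finset (Fin (n + 1))) : ℝ :=
  sInf {x | ∃ lam ∈ Uset Sm v η, x = expRev r lam S}

section Aux
variable {n : ℕ}
noncomputable def topOf (σ : Equiv.Perm (Fin (n+1))) (S : Finset (Fin (n+1))) : Fin (n+1) :=
  if h : S.Nonempty then σ.symm ((S.image σ).min' (h.image σ)) else 0
lemma topOf_mem {σ : Equiv.Perm (Fin (n+1))} {S : Finset (Fin (n+1))} (h : S.Nonempty) :
    topOf σ S ∈ S := by
  rw [topOf, dif_pos h]
  obtain ⟨x, hx, hxe⟩ := Finset.mem_image.1 ((S.image σ).min'_mem (h.image σ))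
  rw [← hxe, Equiv.symm_apply_apply]; exact hx
lemma topOf_le {σ : Equiv.Perm (Fin (n+1))} {S : Finset (Fin (n+1))} (h : S.Nonempty)
    {j : Fin (n+1)} (hj : j ∈ S) : σ (topOf σ S) ≤ σ j := by
  rw [topOf, dif_pos h, Equiv.apply_symm_apply]
  exact Finset.min'_le _ _ (Finset.mem_image_of_mem σ hj)
lemma isTop_topOf {σ : Equiv.Perm (Fin (n+1))} {S : Finset (Fin (n+1))} (h : S.Nonempty) :
    isTop σ S (topOf σ S) :=
  ⟨topOf_mem h, fun _ hj => topOf_le h hj⟩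
lemma isTop_eq_topOf {σ : Equiv.Perm (Fin (n+1))} {S : Finset (Fin (n+1))} (h : S.Nonempty)
    {i : Fin (n+1)} (hi : isTop σ S i) : i = topOf σ S := by
  have h1 : σ i ≤ σ (topOf σ S) := hi.2 _ (topOf_mem h)
  have h2 : σ (topOf σ S) ≤ σ i := topOf_le h hi.1
  exact σ.injective (le_antisymm h1 h2)

/-- swap a revenue-weighted sum of choice probabilities into a sum over rankings. -/
lemma sum_top (g : Fin (n+1) → ℝ) (lam : Equiv.Perm (Fin (n+1)) → ℝ)
    (S : Finset (Fin (n+1))) (h : S.Nonempty) :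
    ∑ i ∈ S, g i * choiceProb lam S i
      = ∑ σ : Equiv.Perm (Fin (n+1)), lam σ * g (topOf σ S) := by
  unfold choiceProb
  simp_rw [Finset.mul_sum]
  rw [Finset.sum_comm]
  refine Finset.sum_congr rfl (fun σ _ => ?_)
  rw [Finset.sum_eq_single_of_mem (topOf σ S) (topOf_mem h)]
  · rw [if_pos (isTop_topOf h), mul_comm]
  · intro i _ hne
    rw [if_neg (fun hT => hne (isTop_eq_topOf h hT)), mul_zero]
noncomputable def rankPerm (f : Fin (n+1) → ℕ) : Equiv.Perm (Fin (n+1)) :=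
  (Tuple.sort f)⁻¹
lemma rankPerm_le_iff {f : Fin (n+1) → ℕ} (hf : Function.Injective f) {x y : Fin (n+1)} :
    rankPerm f x ≤ rankPerm f y ↔ f x ≤ f y := by
  have hm : StrictMono (f ∘ Tuple.sort f) :=
    (Tuple.monotone_sort f).strictMono_of_injective (hf.comp (Equiv.injective _))
  have h1 : ∀ z, (f ∘ Tuple.sort f) (rankPerm f z) = f z := by
    intro z; simp [rankPerm, Function.comp]
  rw [← hm.le_iff_le, h1, h1]
lemma isTop_rankPerm {f : Fin (n+1) → ℕ} (hf : Function.Injective f)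
    {S : Finset (Fin (n+1))} {i : Fin (n+1)} :
    isTop (rankPerm f) S i ↔ (i ∈ S ∧ ∀ j ∈ S, f i ≤ f j) := by
  unfold isTop
  simp_rw [rankPerm_le_iff hf]
lemma topOf_rankPerm {f : Fin (n+1) → ℕ} (hf : Function.Injective f)
    {S : Finset (Fin (n+1))} {i : Fin (n+1)} (h : S.Nonempty) (hi : i ∈ S)
    (hmin : ∀ j ∈ S, f i ≤ f j) : topOf (rankPerm f) S = i :=
  (isTop_eq_topOf h ((isTop_rankPerm hf).2 ⟨hi, hmin⟩)).symm

/-- a downward-closed set of `Fin n` is an initial segment. -/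
lemma prefix_iff_lt_card {d : Fin n → Prop} [DecidablePred d]
    (hd : ∀ ⦃m m' : Fin n⦄, m' ≤ m → d m → d m') (m : Fin n) :
    d m ↔ (m : ℕ) < (Finset.univ.filter d).card := by
  constructor
  · intro hm
    have hsub : Finset.Iic m ⊆ Finset.univ.filter d := by
      intro x hx
      exact Finset.mem_filter.2 ⟨Finset.mem_univ _, hd (Finset.mem_Iic.1 hx) hm⟩
    have := Finset.card_le_card hsub
    rw [Fin.card_Iic] at this
    omega
  · intro hm
    by_contra hdm
    have hsub : Finset.univ.filter d ⊆ Finset.Iio m := by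
      intro x hx
      rcases Finset.mem_filter.1 hx with ⟨-, hdx⟩
      rcases lt_or_ge x m with h | h
      · exact Finset.mem_Iio.2 h
      · exact absurd (hd h hdx) hdm
    have := Finset.card_le_card hsub
    rw [Fin.card_Iio] at this
    omega

lemma sum_ite_telescope (F : ℕ → ℝ) (hF0 : F 0 = 0) {z : ℕ} (hz : z ≤ n)
    (d : Fin n → Prop) [DecidablePred d] (hiff : ∀ m : Fin n, d m ↔ (m : ℕ) < z) :
    (∑ m : Fin n, if d m then F ((m : ℕ) + 1) - F (m : ℕ) else 0) = F z := by
  have h1 : (∑ m : Fin n, if d m then F ((m : ℕ) + 1) - F (m : ℕ) else 0)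
      = ∑ m : Fin n, (fun k : ℕ => if k < z then F (k + 1) - F k else 0) (m : ℕ) := by
    refine Finset.sum_congr rfl (fun m _ => ?_)
    by_cases h : d m
    · rw [if_pos h]; exact (if_pos ((hiff m).1 h)).symm
    · rw [if_neg h]; exact (if_neg (fun hlt => h ((hiff m).2 hlt))).symm
  rw [h1, Fin.sum_univ_eq_sum_range (fun k : ℕ => if k < z then F (k + 1) - F k else 0) n]
  rw [← Finset.sum_subset (Finset.range_subset_range.2 hz)
    (fun k _ hk => if_neg (fun hlt => hk (Finset.mem_range.2 hlt)))]
  rw [Finset.sum_congr rfl (fun k hk => if_pos (Finset.mem_range.1 hk))]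
  rw [Finset.sum_range_sub F z, hF0, sub_zero]

end Aux

section Cons
variable {n : ℕ}
noncomputable def nuF (Sbar : Finset (Fin (n+1))) (z : ℕ) : Fin (n+1) :=
  if h : (Sbar.filter fun a : Fin (n+1) => z ≤ (a : ℕ)).Nonempty
  then (Sbar.filter fun a : Fin (n+1) => z ≤ (a : ℕ)).min' h else 0
lemma nuF_spec {Sbar : Finset (Fin (n+1))} (hl : Fin.last n ∈ Sbar) {z : ℕ} (hz : z ≤ n) :
    nuF Sbar z ∈ Sbar ∧ z ≤ ((nuF Sbar z : Fin (n+1)) : ℕ) ∧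
      ∀ x ∈ Sbar, z ≤ (x : ℕ) → nuF Sbar z ≤ x := by
  have hlf : Fin.last n ∈ Sbar.filter fun a : Fin (n+1) => z ≤ (a : ℕ) :=
    Finset.mem_filter.2 ⟨hl, by simpa using hz⟩
  have hne : (Sbar.filter fun a : Fin (n+1) => z ≤ (a : ℕ)).Nonempty := ⟨_, hlf⟩
  rw [nuF, dif_pos hne]
  have hmem := Finset.min'_mem _ hne
  rcases Finset.mem_filter.1 hmem with ⟨h1, h2⟩
  exact ⟨h1, h2, fun x hx hzx => Finset.min'_le _ _ (Finset.mem_filter.2 ⟨hx, hzx⟩)⟩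
lemma nuF_self {Sbar : Finset (Fin (n+1))} (hl : Fin.last n ∈ Sbar) {a : Fin (n+1)}
    (ha : a ∈ Sbar) : nuF Sbar (a : ℕ) = a := by
  obtain ⟨h1, h2, h3⟩ := nuF_spec hl (z := (a : ℕ)) (by omega)
  exact le_antisymm (h3 a ha le_rfl) h2
def fP (a x : Fin (n+1)) : ℕ := if x = a then 0 else if x = 0 then 1 else (x : ℕ) + 4
noncomputable def fQ (Sbar : Finset (Fin (n+1))) (j x : Fin (n+1)) : ℕ :=
  if x = j then 0 else if x = nuF Sbar (j : ℕ) then 1 else if x = Fin.last n then 2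
  else if x = 0 then 3 else (x : ℕ) + 4
lemma fP_inj (a : Fin (n+1)) : Function.Injective (fP a) := by
  intro x y h
  unfold fP at h
  split_ifs at h <;> first
    | (subst_vars; rfl)
    | omega
lemma fQ_inj (Sbar : Finset (Fin (n+1))) (j : Fin (n+1)) :
    Function.Injective (fQ Sbar j) := by
  intro x y h
  unfold fQ at h
  split_ifs at h <;> first
    | (subst_vars; rfl)
    | omega
noncomputable def Pa (a : Fin (n+1)) : Equiv.Perm (Fin (n+1)) := rankPerm (fP a)
noncomputable def Qj (Sbar : Finset (Fin (n+1))) (j : Fin (n+1)) : Equiv.Perm (Fin (n+1)) :=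
  rankPerm (fQ Sbar j)
noncomputable def Gf (r : Fin (n+1) → ℝ) (Sbar : Finset (Fin (n+1))) (z : ℕ) : ℝ :=
  if z = 0 then 0 else r (nuF Sbar z)
noncomputable def Hf (r : Fin (n+1) → ℝ) (Sbar : Finset (Fin (n+1))) (z : ℕ) : ℝ :=
  if 0 < z ∧ z < n ∧ ((nuF Sbar z : Fin (n+1)) : ℕ) = z then r (nuF Sbar z) else 0
noncomputable def alf (r : Fin (n+1) → ℝ) (Sbar : Finset (Fin (n+1))) (m : Fin n)
    (i : Fin (n+1)) : ℝ :=
  if i = Fin.last n then Gf r Sbar ((m : ℕ) + 1) - Gf r Sbar (m : ℕ)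
  else if i = 0 then Hf r Sbar ((m : ℕ) + 1) - Hf r Sbar (m : ℕ) else 0

variable (hn : 1 ≤ n) {Sbar : Finset (Fin (n+1))}

lemma last_ne_zero (hn : 1 ≤ n) : (Fin.last n : Fin (n+1)) ≠ 0 := by
  intro h
  have := congrArg Fin.val h
  simp at this
  omega

/-- the top of an assortment under `Pa a` -/
lemma topPa {a : Fin (n+1)} (ha : a ≠ 0) {S : Finset (Fin (n+1))} (h0S : (0 : Fin (n+1)) ∈ S) :
    topOf (Pa a) S = if a ∈ S then a else 0 := by
  by_cases haS : a ∈ S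
  · rw [if_pos haS]
    refine topOf_rankPerm (fP_inj a) ⟨a, haS⟩ haS (fun x _ => ?_)
    have : fP a a = 0 := by simp [fP]
    rw [this]; exact Nat.zero_le _
  · rw [if_neg haS]
    refine topOf_rankPerm (fP_inj a) ⟨0, h0S⟩ h0S (fun x hx => ?_)
    have h1 : fP a 0 = 1 := by rw [fP, if_neg (Ne.symm ha), if_pos rfl]
    have hxa : x ≠ a := fun e => haS (e ▸ hx)
    rw [h1, fP, if_neg hxa]
    split_ifs <;> omega

/-- the top of an assortment under `Qj j` -/
lemma topQj (hn : 1 ≤ n) (h0 : (0 : Fin (n+1)) ∈ Sbar) (hl : Fin.last n ∈ Sbar)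
    {j : Fin (n+1)} (hj : j ∉ Sbar)
    {S : Finset (Fin (n+1))} (h0S : (0 : Fin (n+1)) ∈ S) :
    topOf (Qj Sbar j) S = if j ∈ S then j
      else if nuF Sbar (j : ℕ) ∈ S then nuF Sbar (j : ℕ)
      else if Fin.last n ∈ S then Fin.last n else 0 := by
  have hj0 : j ≠ 0 := fun e => hj (e ▸ h0)
  have hjl : j ≠ Fin.last n := fun e => hj (e ▸ hl)
  obtain ⟨hνm, hνge, -⟩ := nuF_spec hl (z := (j : ℕ)) (by omega)
  set ν := nuF Sbar (j : ℕ) with hν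
  have hνj : ν ≠ j := fun e => hj (e ▸ hνm)
  have hν0 : ν ≠ 0 := by
    intro e
    rw [e, Fin.val_zero] at hνge
    exact hj0 (Fin.val_injective (by rw [Fin.val_zero]; omega))
  by_cases h1 : j ∈ S
  · rw [if_pos h1]
    refine topOf_rankPerm (fQ_inj Sbar j) ⟨j, h1⟩ h1 (fun x _ => ?_)
    have : fQ Sbar j j = 0 := by rw [fQ, if_pos rfl]
    rw [this]; exact Nat.zero_le _
  · rw [if_neg h1]
    by_cases h2 : ν ∈ S
    · rw [if_pos h2]
      refine topOf_rankPerm (fQ_inj Sbar j) ⟨ν, h2⟩ h2 (fun x hx => ?_)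
      have hL : fQ Sbar j ν = 1 := by rw [fQ, if_neg hνj, if_pos rfl]
      have hxj : x ≠ j := fun e => h1 (e ▸ hx)
      rw [hL, fQ, if_neg hxj]
      split_ifs <;> omega
    · rw [if_neg h2]
      by_cases h3 : Fin.last n ∈ S
      · rw [if_pos h3]
        refine topOf_rankPerm (fQ_inj Sbar j) ⟨_, h3⟩ h3 (fun x hx => ?_)
        have hlν : Fin.last n ≠ ν := fun e => h2 (e ▸ h3)
        have hL : fQ Sbar j (Fin.last n) = 2 := by
          rw [fQ, if_neg (Ne.symm hjl), if_neg hlν, if_pos rfl]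
        have hxj : x ≠ j := fun e => h1 (e ▸ hx)
        have hxν : x ≠ ν := fun e => h2 (e ▸ hx)
        rw [hL, fQ, if_neg hxj, if_neg hxν]
        split_ifs <;> omega
      · rw [if_neg h3]
        refine topOf_rankPerm (fQ_inj Sbar j) ⟨0, h0S⟩ h0S (fun x hx => ?_)
        have hL : fQ Sbar j 0 = 3 := by
          rw [fQ, if_neg (Ne.symm hj0), if_neg (Ne.symm hν0),
            if_neg (Ne.symm (last_ne_zero hn)), if_pos rfl]
        have hxj : x ≠ j := fun e => h1 (e ▸ hx)
        have hxν : x ≠ ν := fun e => h2 (e ▸ hx)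
        have hxl : x ≠ Fin.last n := fun e => h3 (e ▸ hx)
        rw [hL, fQ, if_neg hxj, if_neg hxν, if_neg hxl]
        split_ifs <;> omega

lemma alf_split (hn : 1 ≤ n) (r : Fin (n+1) → ℝ) (Sbar : Finset (Fin (n+1)))
    (t : Fin n → Fin (n+1)) :
    ∑ m : Fin n, alf r Sbar m (t m)
      = (∑ m : Fin n, if t m = Fin.last n
            then Gf r Sbar ((m : ℕ) + 1) - Gf r Sbar (m : ℕ) else 0)
        + (∑ m : Fin n, if t m = 0
            then Hf r Sbar ((m : ℕ) + 1) - Hf r Sbar (m : ℕ) else 0) := by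
  rw [← Finset.sum_add_distrib]
  refine Finset.sum_congr rfl (fun m _ => ?_)
  unfold alf
  split_ifs with h1 h2 h2 <;> first
    | (rw [h1] at h2; exact absurd h2 (last_ne_zero hn))
    | ring

variable {Sm : Fin n → Finset (Fin (n+1))}

lemma sum_alf_Pa (hn : 1 ≤ n) (r : Fin (n+1) → ℝ) (h0 : (0 : Fin (n+1)) ∈ Sbar)
    (hl : Fin.last n ∈ Sbar)
    (hSm : ∀ m : Fin n, Sm m =
      Finset.univ.filter (fun i : Fin (n + 1) => (i : ℕ) ≤ (m : ℕ) ∨ i = Fin.last n))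
    {a : Fin (n+1)} (ha : a ∈ Sbar) (ha0 : a ≠ 0) :
    ∑ m : Fin n, alf r Sbar m (topOf (Pa a) (Sm m)) = r a := by
  classical
  have hmem : ∀ (m : Fin n) (i : Fin (n+1)),
      i ∈ Sm m ↔ ((i : ℕ) ≤ (m : ℕ) ∨ i = Fin.last n) := by
    intro m i; rw [hSm m]; simp
  have h0m : ∀ m : Fin n, (0 : Fin (n+1)) ∈ Sm m :=
    fun m => (hmem m 0).2 (Or.inl (by simp))
  have htr : ∀ m : Fin n, topOf (Pa a) (Sm m) = if a ∈ Sm m then a else 0 :=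
    fun m => topPa ha0 (h0m m)
  rw [alf_split hn]
  by_cases hal : a = Fin.last n
  · have hiffN : ∀ m : Fin n, (topOf (Pa a) (Sm m) = Fin.last n) ↔ (m : ℕ) < n := by
      intro m
      rw [htr m, if_pos ((hmem m a).2 (Or.inr hal))]
      exact ⟨fun _ => m.isLt, fun _ => hal⟩
    have hiff0 : ∀ m : Fin n, (topOf (Pa a) (Sm m) = 0) ↔ (m : ℕ) < 0 := by
      intro m
      rw [htr m, if_pos ((hmem m a).2 (Or.inr hal))]
      constructor
      · intro h; exact absurd h ha0
      · omega
    rw [sum_ite_telescope (Gf r Sbar) (by simp [Gf]) le_rfl _ hiffN,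
        sum_ite_telescope (Hf r Sbar) (by simp [Hf]) (Nat.zero_le n) _ hiff0]
    have hnu : nuF Sbar n = Fin.last n := by
      have := nuF_self hl hl
      rwa [Fin.val_last] at this
    rw [Gf, if_neg (by omega), hnu, Hf]
    simp [hal]
  · have hanev : (a : ℕ) ≠ n := fun h => hal (Fin.val_injective (by rw [h, Fin.val_last]))
    have haval : (a : ℕ) < n := by have := a.isLt; omega
    have hmem' : ∀ m : Fin n, (a ∈ Sm m ↔ (a : ℕ) ≤ (m : ℕ)) := by
      intro m; rw [hmem m a]
      exact or_iff_left hal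
    have hiffN : ∀ m : Fin n, (topOf (Pa a) (Sm m) = Fin.last n) ↔ (m : ℕ) < 0 := by
      intro m
      rw [htr m]
      constructor
      · intro h
        split_ifs at h
        · exact absurd h hal
        · exact absurd h.symm (last_ne_zero hn)
      · omega
    have hiff0 : ∀ m : Fin n, (topOf (Pa a) (Sm m) = 0) ↔ (m : ℕ) < (a : ℕ) := by
      intro m
      rw [htr m]
      by_cases hc : a ∈ Sm m
      · rw [if_pos hc]
        rw [hmem' m] at hc
        constructor
        · intro h; exact absurd h ha0
        · intro h; omega
      · rw [if_neg hc]
        rw [hmem' m] at hc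
        constructor
        · intro _; omega
        · intro _; rfl
    rw [sum_ite_telescope (Gf r Sbar) (by simp [Gf]) (Nat.zero_le n) _ hiffN,
        sum_ite_telescope (Hf r Sbar) (by simp [Hf]) (by omega) _ hiff0]
    have hav0 : (a : ℕ) ≠ 0 := fun h => ha0 (Fin.val_injective (by rw [h, Fin.val_zero]))
    have hnu : nuF Sbar (a : ℕ) = a := nuF_self hl ha
    rw [Gf, if_pos rfl, Hf, if_pos ⟨by omega, haval, by rw [hnu]⟩, hnu, zero_add]

lemma sum_alf_Qj (hn : 1 ≤ n) (r : Fin (n+1) → ℝ) (h0 : (0 : Fin (n+1)) ∈ Sbar)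
    (hl : Fin.last n ∈ Sbar)
    (hSm : ∀ m : Fin n, Sm m =
      Finset.univ.filter (fun i : Fin (n + 1) => (i : ℕ) ≤ (m : ℕ) ∨ i = Fin.last n))
    {j : Fin (n+1)} (hj : j ∉ Sbar) :
    ∑ m : Fin n, alf r Sbar m (topOf (Qj Sbar j) (Sm m)) = r (nuF Sbar (j : ℕ)) := by
  classical
  have hmem : ∀ (m : Fin n) (i : Fin (n+1)),
      i ∈ Sm m ↔ ((i : ℕ) ≤ (m : ℕ) ∨ i = Fin.last n) := by
    intro m i; rw [hSm m]; simp
  have h0m : ∀ m : Fin n, (0 : Fin (n+1)) ∈ Sm m :=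
    fun m => (hmem m 0).2 (Or.inl (by simp))
  have hj0 : j ≠ 0 := fun e => hj (e ▸ h0)
  have hjl : j ≠ Fin.last n := fun e => hj (e ▸ hl)
  have hjn : (j : ℕ) ≤ n := by omega
  obtain ⟨hνm, hνge, -⟩ := nuF_spec hl hjn
  have htr : ∀ m : Fin n, topOf (Qj Sbar j) (Sm m)
      = if (j : ℕ) ≤ (m : ℕ) then j else Fin.last n := by
    intro m
    rw [topQj hn h0 hl hj (h0m m)]
    by_cases hc : (j : ℕ) ≤ (m : ℕ)
    · rw [if_pos ((hmem m j).2 (Or.inl hc)), if_pos hc]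
    · have hjm : j ∉ Sm m := by
        rw [hmem m j]
        rintro (h | h)
        · exact hc h
        · exact hjl h
      rw [if_neg hjm, if_neg hc]
      by_cases hν : nuF Sbar (j : ℕ) ∈ Sm m
      · have hνl : nuF Sbar (j : ℕ) = Fin.last n := by
          rcases (hmem m _).1 hν with h | h
          · omega
          · exact h
        rw [if_pos hν, hνl]
      · rw [if_neg hν, if_pos ((hmem m _).2 (Or.inr rfl))]
  have hiffN : ∀ m : Fin n, (topOf (Qj Sbar j) (Sm m) = Fin.last n) ↔ (m : ℕ) < (j : ℕ) := by
    intro m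
    rw [htr m]
    by_cases hc : (j : ℕ) ≤ (m : ℕ)
    · rw [if_pos hc]
      constructor
      · intro h; exact absurd h hjl
      · intro h; omega
    · rw [if_neg hc]
      constructor
      · intro _; omega
      · intro _; rfl
  have hiff0 : ∀ m : Fin n, (topOf (Qj Sbar j) (Sm m) = 0) ↔ (m : ℕ) < 0 := by
    intro m
    rw [htr m]
    constructor
    · intro h
      split_ifs at h
      · exact absurd h hj0
      · exact absurd h (last_ne_zero hn)
    · omega
  rw [alf_split hn,
      sum_ite_telescope (Gf r Sbar) (by simp [Gf]) hjn _ hiffN,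
      sum_ite_telescope (Hf r Sbar) (by simp [Hf]) (Nat.zero_le n) _ hiff0]
  have hjv0 : (j : ℕ) ≠ 0 := fun h => hj0 (Fin.val_injective (by rw [h, Fin.val_zero]))
  rw [Gf, if_neg hjv0, Hf]
  simp

/-- Pointwise dual certificate: for every ranking, the dual collection is at most the
revenue of its top choice in `Sbar`. -/
lemma dual_bound (hn : 1 ≤ n) (r : Fin (n+1) → ℝ) (hr0 : r 0 = 0) (hr : StrictMono r)
    (h0 : (0 : Fin (n+1)) ∈ Sbar) (hl : Fin.last n ∈ Sbar)
    (hSm : ∀ m : Fin n, Sm m =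
      Finset.univ.filter (fun i : Fin (n + 1) => (i : ℕ) ≤ (m : ℕ) ∨ i = Fin.last n))
    (σ : Equiv.Perm (Fin (n+1))) :
    ∑ m : Fin n, alf r Sbar m (topOf σ (Sm m)) ≤ r (topOf σ Sbar) := by
  classical
  have hmem : ∀ (m : Fin n) (i : Fin (n+1)),
      i ∈ Sm m ↔ ((i : ℕ) ≤ (m : ℕ) ∨ i = Fin.last n) := by
    intro m i; rw [hSm m]; simp
  have h0m : ∀ m : Fin n, (0 : Fin (n+1)) ∈ Sm m :=
    fun m => (hmem m 0).2 (Or.inl (by simp))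
  have hSmne : ∀ m : Fin n, (Sm m).Nonempty := fun m => ⟨0, h0m m⟩
  have hSbne : Sbar.Nonempty := ⟨0, h0⟩
  set T := topOf σ Sbar with hT
  have hTmem : T ∈ Sbar := topOf_mem hSbne
  have hTtop : ∀ x ∈ Sbar, σ T ≤ σ x := fun x hx => topOf_le hSbne hx
  have hrT0 : 0 ≤ r T := by rw [← hr0]; exact hr.monotone (Fin.zero_le T)
  set t := fun m : Fin n => topOf σ (Sm m) with ht
  have httop : ∀ (m : Fin n), ∀ x ∈ Sm m, σ (t m) ≤ σ x :=
    fun m x hx => topOf_le (hSmne m) hx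
  have hsub : ∀ ⦃m m' : Fin n⦄, m' ≤ m → Sm m' ⊆ Sm m := by
    intro m m' hmm' x hx
    rw [hmem m' x] at hx
    rw [hmem m x]
    rcases hx with h | h
    · exact Or.inl (h.trans (by exact_mod_cast hmm'))
    · exact Or.inr h
  have hdcN : ∀ ⦃m m' : Fin n⦄, m' ≤ m → t m = Fin.last n → t m' = Fin.last n := by
    intro m m' hmm' hm
    have hlm : Fin.last n ∈ Sm m' := (hmem m' _).2 (Or.inr rfl)
    refine (isTop_eq_topOf (hSmne m') ⟨hlm, fun x hx => ?_⟩).symm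
    have := httop m x (hsub hmm' hx)
    rwa [hm] at this
  have hdc0 : ∀ ⦃m m' : Fin n⦄, m' ≤ m → t m = 0 → t m' = 0 := by
    intro m m' hmm' hm
    refine (isTop_eq_topOf (hSmne m') ⟨h0m m', fun x hx => ?_⟩).symm
    have := httop m x (hsub hmm' hx)
    rwa [hm] at this
  set zN := (Finset.univ.filter fun m : Fin n => t m = Fin.last n).card with hzN
  set z0 := (Finset.univ.filter fun m : Fin n => t m = 0).card with hz0
  have hiffN : ∀ m : Fin n, (t m = Fin.last n) ↔ (m : ℕ) < zN := prefix_iff_lt_card hdcN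
  have hiff0 : ∀ m : Fin n, (t m = 0) ↔ (m : ℕ) < z0 := prefix_iff_lt_card hdc0
  have hzNn : zN ≤ n := le_trans (Finset.card_filter_le _ _) (by simp)
  have hz0n : z0 ≤ n := le_trans (Finset.card_filter_le _ _) (by simp)
  rw [alf_split hn, sum_ite_telescope (Gf r Sbar) (by simp [Gf]) hzNn _ hiffN,
      sum_ite_telescope (Hf r Sbar) (by simp [Hf]) hz0n _ hiff0]
  rcases Nat.eq_zero_or_pos zN with hzNe | hzNp
  · rcases Nat.eq_zero_or_pos z0 with hz0e | hz0p
    · rw [hzNe, hz0e]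
      simpa [Gf, Hf] using hrT0
    · have hGf : Gf r Sbar zN = 0 := by rw [hzNe]; simp [Gf]
      rw [hGf, zero_add, Hf]
      split_ifs with hc
      · obtain ⟨hc1, hc2, hc3⟩ := hc
        obtain ⟨hzmem, hzge, -⟩ := nuF_spec hl hz0n
        have hm1 : t ⟨z0 - 1, by omega⟩ = 0 := (hiff0 _).2 (by simp; omega)
        have h0top : ∀ x ∈ Sm ⟨z0 - 1, by omega⟩, σ 0 ≤ σ x := by
          intro x hx
          have := httop _ x hx
          rwa [hm1] at this
        have hm2 : ¬ t ⟨z0, hc2⟩ = 0 := fun h => by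
          have := (hiff0 _).1 h
          simp at this
        have hex : ∃ x ∈ Sm ⟨z0, hc2⟩, σ x < σ 0 := by
          by_contra hno
          push_neg at hno
          exact hm2 ((isTop_eq_topOf (hSmne _) ⟨h0m _, fun x hx => hno x hx⟩).symm)
        obtain ⟨x, hx, hxlt⟩ := hex
        rcases (hmem _ x).1 hx with hxle | hxl
        · have hxle' : (x : ℕ) ≤ z0 := hxle
          by_cases hxe : (x : ℕ) ≤ z0 - 1
          · exact absurd (h0top x ((hmem _ x).2 (Or.inl (by simp; omega)))) (not_le.2 hxlt)
          · have hxz2 : x = nuF Sbar z0 := Fin.val_injective (by rw [hc3]; omega)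
            have hTz : z0 ≤ (T : ℕ) := by
              by_contra hTlt
              push_neg at hTlt
              have hTm : T ∈ Sm ⟨z0 - 1, by omega⟩ := (hmem _ T).2 (Or.inl (by simp; omega))
              have hA := h0top T hTm
              have hB := hTtop (nuF Sbar z0) hzmem
              rw [← hxz2] at hB
              exact absurd (hB.trans_lt hxlt) (not_lt.2 hA)
            exact hr.monotone (by rw [Fin.le_def, hc3]; exact hTz)
        · have := h0top (Fin.last n) ((hmem _ _).2 (Or.inr rfl))
          rw [hxl] at hxlt
          exact absurd hxlt (not_lt.2 this)
      · exact hrT0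
  · have hz0e : z0 = 0 := by
      by_contra hz0'
      have hz0p : 0 < z0 := Nat.pos_of_ne_zero hz0'
      have e1 : t ⟨0, hn⟩ = Fin.last n := (hiffN _).2 (by simpa using hzNp)
      have e2 : t ⟨0, hn⟩ = 0 := (hiff0 _).2 (by simpa using hz0p)
      rw [e1] at e2
      exact last_ne_zero hn e2
    have hHf : Hf r Sbar z0 = 0 := by rw [hz0e]; simp [Hf]
    rw [hHf, add_zero, Gf, if_neg (by omega)]
    obtain ⟨hνm, hνge, hνmin⟩ := nuF_spec hl hzNn
    have hm1 : t ⟨zN - 1, by omega⟩ = Fin.last n := (hiffN _).2 (by simp; omega)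
    have hltop : ∀ x ∈ Sm ⟨zN - 1, by omega⟩, σ (Fin.last n) ≤ σ x := by
      intro x hx
      have := httop _ x hx
      rwa [hm1] at this
    have hTz : zN ≤ (T : ℕ) := by
      by_contra hTlt
      push_neg at hTlt
      have hTm : T ∈ Sm ⟨zN - 1, by omega⟩ := (hmem _ T).2 (Or.inl (by simp; omega))
      have hA := hltop T hTm
      have hB := hTtop (Fin.last n) hl
      have hTl : T = Fin.last n := σ.injective (le_antisymm hB hA)
      rw [hTl, Fin.val_last] at hTlt
      omega
    exact hr.monotone (hνmin T hTmem hTz)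

end Cons

/-- Theorem 4 of the paper: with reverse revenue-ordered past assortments and fixed revenues,
every assortment containing `0` and `n` is the unique robust optimum for some realization of
the historical sales data. -/
theorem statement8 (n : ℕ) (hn : 1 ≤ n)
    (r : Fin (n + 1) → ℝ) (hr0 : r 0 = 0) (hr : StrictMono r)
    (Sm : Fin n → Finset (Fin (n + 1)))
    (hSm : ∀ m : Fin n, Sm m =
      Finset.univ.filter (fun i : Fin (n + 1) => (i : ℕ) ≤ (m : ℕ) ∨ i = Fin.last n))
    (Sbar : Finset (Fin (n + 1))) (h0 : (0 : Fin (n + 1)) ∈ Sbar)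
    (hl : Fin.last n ∈ Sbar) :
    ∃ v : Fin n → Fin (n + 1) → ℝ,
      (Uset Sm v 0).Nonempty ∧
      ∀ S : Finset (Fin (n + 1)), 0 ∈ S → S ≠ Sbar →
        wcRev Sm v 0 r S < wcRev Sm v 0 r Sbar := by
  classical
  -- basic membership facts
  have hmem : ∀ (m : Fin n) (i : Fin (n+1)),
      i ∈ Sm m ↔ ((i : ℕ) ≤ (m : ℕ) ∨ i = Fin.last n) := by
    intro m i; rw [hSm m]; simp
  have h0m : ∀ m : Fin n, (0 : Fin (n+1)) ∈ Sm m :=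
    fun m => (hmem m 0).2 (Or.inl (by simp))
  have hSmne : ∀ m : Fin n, (Sm m).Nonempty := fun m => ⟨0, h0m m⟩
  have hSbne : Sbar.Nonempty := ⟨0, h0⟩
  -- products and weights
  set A : Finset (Fin (n+1)) := Sbar.erase 0 with hA
  set B : Finset (Fin (n+1)) := Sbarᶜ with hB
  have hAl : Fin.last n ∈ A := Finset.mem_erase.2 ⟨last_ne_zero hn, hl⟩
  have hk1 : 1 ≤ A.card := Finset.card_pos.2 ⟨_, hAl⟩
  have hbn : B.card ≤ n := by
    have h1 : 1 ≤ Sbar.card := Finset.card_pos.2 hSbne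
    have h2 : Sbar.card ≤ Fintype.card (Fin (n+1)) := Finset.card_le_univ _
    have h3 := Finset.card_compl (α := Fin (n+1)) Sbar
    rw [← hB] at h3
    rw [Fintype.card_fin] at h3 h2
    omega
  set e1 : Fin (n+1) := ⟨1, by omega⟩ with he1
  have hr1pos : 0 < r e1 := by
    rw [← hr0]
    exact hr (by rw [Fin.lt_def]; simp [he1])
  have hRpos : 0 < r (Fin.last n) := by
    rw [← hr0]
    exact hr (by rw [Fin.lt_def]; simp; omega)
  have hr_nonneg : ∀ x, 0 ≤ r x := fun x => by
    rw [← hr0]; exact hr.monotone (Fin.zero_le x)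
  have hr_le_R : ∀ x, r x ≤ r (Fin.last n) := fun x => hr.monotone (Fin.le_last x)
  set R : ℝ := r (Fin.last n) with hR2
  set ε : ℝ := r e1 / (2 * n * R + 1) with hε
  have hDpos : (0:ℝ) < 2 * n * R + 1 := by positivity
  have hεpos : 0 < ε := div_pos hr1pos hDpos
  have hεD : ε * (2 * n * R + 1) = r e1 := div_mul_cancel₀ _ (ne_of_gt hDpos)
  have hkpos : (0:ℝ) < (A.card : ℝ) + B.card * ε := by
    have h1 : (1:ℝ) ≤ (A.card : ℝ) := by exact_mod_cast hk1
    have h2 : (0:ℝ) ≤ (B.card : ℝ) * ε := by positivity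
    linarith
  set w : ℝ := ((A.card : ℝ) + B.card * ε)⁻¹ with hw
  have hwpos : 0 < w := inv_pos.2 hkpos
  set δ : ℝ := ε * w with hδ
  have hδpos : 0 < δ := mul_pos hεpos hwpos
  set lam : Equiv.Perm (Fin (n+1)) → ℝ := fun σ =>
    (∑ a ∈ A, if σ = Pa a then w else 0) + (∑ j ∈ B, if σ = Qj Sbar j then δ else 0)
    with hlam
  -- evaluation of sums against lam
  have hsum_eval : ∀ F : Equiv.Perm (Fin (n+1)) → ℝ,
      (∑ σ : Equiv.Perm (Fin (n+1)), lam σ * F σ)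
        = (∑ a ∈ A, w * F (Pa a)) + (∑ j ∈ B, δ * F (Qj Sbar j)) := by
    intro F
    have hterm : ∀ σ, lam σ * F σ
        = (∑ a ∈ A, if σ = Pa a then w * F σ else 0)
          + (∑ j ∈ B, if σ = Qj Sbar j then δ * F σ else 0) := by
      intro σ
      rw [hlam]
      simp only [add_mul, Finset.sum_mul, ite_mul, zero_mul]
    rw [Finset.sum_congr rfl (fun σ _ => hterm σ), Finset.sum_add_distrib]
    congr 1
    · rw [Finset.sum_comm]
      refine Finset.sum_congr rfl (fun a _ => ?_)
      rw [Finset.sum_ite_eq' Finset.univ (Pa a) (fun σ => w * F σ),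
        if_pos (Finset.mem_univ _)]
    · rw [Finset.sum_comm]
      refine Finset.sum_congr rfl (fun j _ => ?_)
      rw [Finset.sum_ite_eq' Finset.univ (Qj Sbar j) (fun σ => δ * F σ),
        if_pos (Finset.mem_univ _)]
  have hlam_nonneg : ∀ σ, 0 ≤ lam σ := by
    intro σ
    rw [hlam]
    refine add_nonneg (Finset.sum_nonneg fun a _ => ?_) (Finset.sum_nonneg fun j _ => ?_) <;>
      · split_ifs <;> first | exact le_of_lt (by assumption) | exact le_rfl | positivity
  have hsum1 : ∑ σ : Equiv.Perm (Fin (n+1)), lam σ = 1 := by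
    have h1 := hsum_eval (fun _ => 1)
    simp only [mul_one] at h1
    rw [h1, Finset.sum_const, Finset.sum_const, nsmul_eq_mul, nsmul_eq_mul, hδ]
    have h2 : (A.card : ℝ) * w + (B.card : ℝ) * (ε * w)
        = ((A.card : ℝ) + B.card * ε) * w := by ring
    rw [h2, hw, mul_inv_cancel₀ (ne_of_gt hkpos)]
  have hlamCM : IsChoiceModel lam := ⟨hlam_nonneg, hsum1⟩
  -- the sales data
  refine ⟨fun m i => choiceProb lam (Sm m) i, ?_, ?_⟩
  case _ =>
    exact ⟨lam, hlamCM, fun m i _ => by simp⟩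
  have hUlam : lam ∈ Uset Sm (fun m i => choiceProb lam (Sm m) i) 0 :=
    ⟨hlamCM, fun m i _ => by simp⟩
  -- tops of the base rankings on Sbar
  have hmemA : ∀ a ∈ A, a ∈ Sbar ∧ a ≠ 0 := by
    intro a ha
    rw [hA, Finset.mem_erase] at ha
    exact ⟨ha.2, ha.1⟩
  have hmemB : ∀ j ∈ B, j ∉ Sbar := by
    intro j hj
    rw [hB, Finset.mem_compl] at hj
    exact hj
  have hjn : ∀ j ∈ B, (j : ℕ) ≤ n := fun j _ => by omega
  have htopPaSbar : ∀ a ∈ A, topOf (Pa a) Sbar = a := by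
    intro a ha
    rw [topPa (hmemA a ha).2 h0, if_pos (hmemA a ha).1]
  have htopQjSbar : ∀ j ∈ B, topOf (Qj Sbar j) Sbar = nuF Sbar (j : ℕ) := by
    intro j hj
    obtain ⟨hνm, -, -⟩ := nuF_spec hl (hjn j hj)
    rw [topQj hn h0 hl (hmemB j hj) h0, if_neg (hmemB j hj), if_pos hνm]
  -- the common worst-case value
  set c : ℝ := (∑ a ∈ A, w * r a) + (∑ j ∈ B, δ * r (nuF Sbar (j : ℕ))) with hc
  -- dual lower bound for every model in the uncertainty set
  have hLB : ∀ lam' ∈ Uset Sm (fun m i => choiceProb lam (Sm m) i) 0,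
      c ≤ expRev r lam' Sbar := by
    rintro lam' ⟨⟨hpos', -⟩, hcons⟩
    have hconsEq : ∀ (m : Fin n), ∀ i ∈ Sm m,
        choiceProb lam' (Sm m) i = choiceProb lam (Sm m) i := by
      intro m i hi
      have := hcons m i hi
      have h2 : |choiceProb lam' (Sm m) i - choiceProb lam (Sm m) i| ≤ 0 := this
      have h3 := abs_nonneg (choiceProb lam' (Sm m) i - choiceProb lam (Sm m) i)
      have h4 : |choiceProb lam' (Sm m) i - choiceProb lam (Sm m) i| = 0 := le_antisymm h2 h3
      have := abs_eq_zero.1 h4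
      linarith
    have hswap : ∀ μ : Equiv.Perm (Fin (n+1)) → ℝ,
        (∑ σ : Equiv.Perm (Fin (n+1)), μ σ * (∑ m : Fin n, alf r Sbar m (topOf σ (Sm m))))
          = ∑ m : Fin n, ∑ i ∈ Sm m, alf r Sbar m i * choiceProb μ (Sm m) i := by
      intro μ
      simp_rw [Finset.mul_sum]
      rw [Finset.sum_comm]
      exact Finset.sum_congr rfl fun m _ => (sum_top (alf r Sbar m) μ (Sm m) (hSmne m)).symm
    have step1 : expRev r lam' Sbar = ∑ σ : Equiv.Perm (Fin (n+1)),
        lam' σ * r (topOf σ Sbar) := sum_top r lam' Sbar hSbne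
    have step2 : (∑ σ : Equiv.Perm (Fin (n+1)),
          lam' σ * (∑ m : Fin n, alf r Sbar m (topOf σ (Sm m))))
        ≤ ∑ σ : Equiv.Perm (Fin (n+1)), lam' σ * r (topOf σ Sbar) :=
      Finset.sum_le_sum fun σ _ => mul_le_mul_of_nonneg_left
        (dual_bound hn r hr0 hr h0 hl hSm σ) (hpos' σ)
    have step3 : (∑ σ : Equiv.Perm (Fin (n+1)),
          lam' σ * (∑ m : Fin n, alf r Sbar m (topOf σ (Sm m))))
        = ∑ σ : Equiv.Perm (Fin (n+1)),
            lam σ * (∑ m : Fin n, alf r Sbar m (topOf σ (Sm m))) := by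
      rw [hswap lam', hswap lam]
      exact Finset.sum_congr rfl fun m _ => Finset.sum_congr rfl fun i hi => by
        rw [hconsEq m i hi]
    have step4 : (∑ σ : Equiv.Perm (Fin (n+1)),
          lam σ * (∑ m : Fin n, alf r Sbar m (topOf σ (Sm m)))) = c := by
      rw [hsum_eval, hc]
      congr 1
      · exact Finset.sum_congr rfl fun a ha => by
          rw [sum_alf_Pa hn r h0 hl hSm (hmemA a ha).1 (hmemA a ha).2]
      · exact Finset.sum_congr rfl fun j hj => by
          rw [sum_alf_Qj hn r h0 hl hSm (hmemB j hj)]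
    calc c = ∑ σ : Equiv.Perm (Fin (n+1)),
          lam' σ * (∑ m : Fin n, alf r Sbar m (topOf σ (Sm m))) := by rw [step3, step4]
      _ ≤ ∑ σ : Equiv.Perm (Fin (n+1)), lam' σ * r (topOf σ Sbar) := step2
      _ = expRev r lam' Sbar := step1.symm
  -- strict upper bound for every other assortment
  have hUB : ∀ S : Finset (Fin (n+1)), (0:Fin (n+1)) ∈ S → S ≠ Sbar →
      expRev r lam S < c := by
    intro S h0S hSneq
    have hSne : S.Nonempty := ⟨0, h0S⟩
    have hexp : expRev r lam S
        = (∑ a ∈ A, w * r (topOf (Pa a) S)) + (∑ j ∈ B, δ * r (topOf (Qj Sbar j) S)) := by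
      rw [expRev, sum_top r lam S hSne, hsum_eval]
    rw [hexp, hc]
    -- difference form
    rw [← sub_pos]
    have hA1 : ∑ a ∈ A, w * (r a - r (topOf (Pa a) S))
        = (∑ a ∈ A, w * r a) - ∑ a ∈ A, w * r (topOf (Pa a) S) := by
      rw [← Finset.sum_sub_distrib]
      exact Finset.sum_congr rfl fun a _ => by ring
    have hB1 : ∑ j ∈ B, δ * (r (nuF Sbar (j:ℕ)) - r (topOf (Qj Sbar j) S))
        = (∑ j ∈ B, δ * r (nuF Sbar (j:ℕ))) - ∑ j ∈ B, δ * r (topOf (Qj Sbar j) S) := by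
      rw [← Finset.sum_sub_distrib]
      exact Finset.sum_congr rfl fun j _ => by ring
    have hdiff : ((∑ a ∈ A, w * r a) + (∑ j ∈ B, δ * r (nuF Sbar (j:ℕ))))
        - ((∑ a ∈ A, w * r (topOf (Pa a) S)) + (∑ j ∈ B, δ * r (topOf (Qj Sbar j) S)))
        = (∑ a ∈ A, w * (r a - r (topOf (Pa a) S)))
          + (∑ j ∈ B, δ * (r (nuF Sbar (j:ℕ)) - r (topOf (Qj Sbar j) S))) := by
      rw [hA1, hB1]
      ring
    rw [hdiff]
    by_cases hAS : A ⊆ S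
    · -- S strictly contains Sbar
      have hSbarS : Sbar ⊆ S := by
        intro x hx
        rcases eq_or_ne x 0 with rfl | hx0
        · exact h0S
        · exact hAS (Finset.mem_erase.2 ⟨hx0, hx⟩)
      obtain ⟨j0, hj0S, hj0Sb⟩ : ∃ j0 ∈ S, j0 ∉ Sbar := by
        by_contra hcon
        push_neg at hcon
        exact hSneq (Finset.Subset.antisymm hcon hSbarS)
      have hj0B : j0 ∈ B := Finset.mem_compl.2 hj0Sb
      have hApart : ∀ a ∈ A, w * (r a - r (topOf (Pa a) S)) = 0 := by
        intro a ha
        rw [topPa (hmemA a ha).2 h0S, if_pos (hAS ha), sub_self, mul_zero]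
      rw [Finset.sum_congr rfl hApart, Finset.sum_const, smul_zero, zero_add]
      -- B part strictly positive via j0
      have hterm_nonneg : ∀ j ∈ B, 0 ≤ δ * (r (nuF Sbar (j:ℕ)) - r (topOf (Qj Sbar j) S)) := by
        intro j hj
        obtain ⟨hνm, hνge, -⟩ := nuF_spec hl (hjn j hj)
        rw [topQj hn h0 hl (hmemB j hj) h0S]
        by_cases hjS : j ∈ S
        · rw [if_pos hjS]
          have hlt : j < nuF Sbar (j:ℕ) := by
            rw [Fin.lt_def]
            have : nuF Sbar (j:ℕ) ≠ j := fun e => (hmemB j hj) (e ▸ hνm)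
            have hne2 : ((nuF Sbar (j:ℕ) : Fin (n+1)) : ℕ) ≠ (j:ℕ) :=
              fun e => this (Fin.val_injective e)
            omega
          have hrlt := hr hlt
          exact mul_nonneg (le_of_lt hδpos) (by linarith)
        · rw [if_neg hjS, if_pos (hSbarS hνm), sub_self, mul_zero]
      have hterm_pos : 0 < δ * (r (nuF Sbar (j0:ℕ)) - r (topOf (Qj Sbar j0) S)) := by
        obtain ⟨hνm, hνge, -⟩ := nuF_spec hl (hjn j0 hj0B)
        rw [topQj hn h0 hl (hmemB j0 hj0B) h0S, if_pos hj0S]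
        have hlt : j0 < nuF Sbar (j0:ℕ) := by
          rw [Fin.lt_def]
          have : nuF Sbar (j0:ℕ) ≠ j0 := fun e => (hmemB j0 hj0B) (e ▸ hνm)
          have hne2 : ((nuF Sbar (j0:ℕ) : Fin (n+1)) : ℕ) ≠ (j0:ℕ) :=
            fun e => this (Fin.val_injective e)
          omega
        have hrlt := hr hlt
        exact mul_pos hδpos (by linarith)
      calc (0:ℝ) < δ * (r (nuF Sbar (j0:ℕ)) - r (topOf (Qj Sbar j0) S)) := hterm_pos
        _ ≤ ∑ j ∈ B, δ * (r (nuF Sbar (j:ℕ)) - r (topOf (Qj Sbar j) S)) :=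
          Finset.single_le_sum hterm_nonneg hj0B
    · -- some product of Sbar is missing from S
      obtain ⟨a0, ha0A, ha0S⟩ := Finset.not_subset.1 hAS
      have hApart_nonneg : ∀ a ∈ A, 0 ≤ w * (r a - r (topOf (Pa a) S)) := by
        intro a ha
        rw [topPa (hmemA a ha).2 h0S]
        by_cases haS : a ∈ S
        · rw [if_pos haS, sub_self, mul_zero]
        · rw [if_neg haS, hr0, sub_zero]
          exact mul_nonneg (le_of_lt hwpos) (hr_nonneg a)
      have hApart_a0 : w * r e1 ≤ w * (r a0 - r (topOf (Pa a0) S)) := by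
        rw [topPa (hmemA a0 ha0A).2 h0S, if_neg ha0S, hr0, sub_zero]
        have h1a : e1 ≤ a0 := by
          rw [Fin.le_def]
          have : (a0 : ℕ) ≠ 0 :=
            fun e => (hmemA a0 ha0A).2 (Fin.val_injective (by rw [e, Fin.val_zero]))
          simp [he1]
          omega
        exact mul_le_mul_of_nonneg_left (hr.monotone h1a) (le_of_lt hwpos)
      have hAsum : w * r e1 ≤ ∑ a ∈ A, w * (r a - r (topOf (Pa a) S)) :=
        le_trans hApart_a0 (Finset.single_le_sum hApart_nonneg ha0A)
      have hBsum : -(n * (δ * R)) ≤ ∑ j ∈ B, δ * (r (nuF Sbar (j:ℕ)) - r (topOf (Qj Sbar j) S)) := by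
        have hterm : ∀ j ∈ B, -(δ * R) ≤ δ * (r (nuF Sbar (j:ℕ)) - r (topOf (Qj Sbar j) S)) := by
          intro j hj
          have h1' : 0 ≤ r (nuF Sbar (j:ℕ)) := hr_nonneg _
          have h2' : r (topOf (Qj Sbar j) S) ≤ R := hr_le_R _
          have h3' : (0:ℝ) - R ≤ r (nuF Sbar (j:ℕ)) - r (topOf (Qj Sbar j) S) := by linarith
          calc -(δ * R) = δ * ((0:ℝ) - R) := by ring
            _ ≤ δ * (r (nuF Sbar (j:ℕ)) - r (topOf (Qj Sbar j) S)) :=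
              mul_le_mul_of_nonneg_left h3' (le_of_lt hδpos)
        have hcs := Finset.card_nsmul_le_sum B _ _ hterm
        rw [nsmul_eq_mul] at hcs
        have hbn' : (B.card : ℝ) ≤ n := by exact_mod_cast hbn
        have hδR : 0 ≤ δ * R := le_of_lt (mul_pos hδpos hRpos)
        have hmul : (B.card : ℝ) * (δ * R) ≤ (n : ℝ) * (δ * R) :=
          mul_le_mul_of_nonneg_right hbn' hδR
        have hcs' : -((B.card : ℝ) * (δ * R))
            ≤ ∑ j ∈ B, δ * (r (nuF Sbar (j:ℕ)) - r (topOf (Qj Sbar j) S)) := by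
          calc -((B.card : ℝ) * (δ * R)) = (B.card : ℝ) * -(δ * R) := by ring
            _ ≤ _ := hcs
        linarith
      have hre1 : r e1 - (n : ℝ) * ε * R = ε * ((n : ℝ) * R + 1) := by
        rw [← hεD]; ring
      have hnum : 0 < w * r e1 - n * (δ * R) := by
        rw [hδ]
        have he : w * r e1 - (n:ℝ) * (ε * w * R) = w * (r e1 - (n:ℝ) * ε * R) := by ring
        rw [he, hre1]
        have hp2 : (0:ℝ) < (n : ℝ) * R + 1 := by positivity
        exact mul_pos hwpos (mul_pos hεpos hp2)
      linarith
  -- finish via infima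
  intro S h0S hSneq
  have hbdd : BddBelow {x | ∃ lam' ∈ Uset Sm (fun m i => choiceProb lam (Sm m) i) 0,
      x = expRev r lam' S} := by
    refine ⟨0, ?_⟩
    rintro x ⟨lam', ⟨⟨hpos', -⟩, -⟩, rfl⟩
    refine Finset.sum_nonneg fun i _ => mul_nonneg (hr_nonneg i) ?_
    exact Finset.sum_nonneg fun σ _ => by
      split_ifs
      · exact hpos' σ
      · exact le_rfl
  have hne2 : {x | ∃ lam' ∈ Uset Sm (fun m i => choiceProb lam (Sm m) i) 0,
      x = expRev r lam' Sbar}.Nonempty := ⟨_, lam, hUlam, rfl⟩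
  calc wcRev Sm (fun m i => choiceProb lam (Sm m) i) 0 r S
      ≤ expRev r lam S := csInf_le hbdd ⟨lam, hUlam, rfl⟩
    _ < c := hUB S h0S hSneq
    _ ≤ wcRev Sm (fun m i => choiceProb lam (Sm m) i) 0 r Sbar := by
        refine le_csInf hne2 ?_
        rintro x ⟨lam', hU', rfl⟩
        exact hLB lam' hU'


end RobustAssortment
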